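/- For every no-packet state s = (v1, ∞) with v1 ≥ 1, there exists λ ≥ 0 such that the two action-values of the limiting discounted value function coincide: V((v1,∞), λ; 0) = V((v1,∞), λ; 1), i.e., λ + α[(1−q)V(v1+1, 1; λ) + q·V(1, ∞; λ)] = α·V(v1+1, ∞; λ). -/

import Mathlib

/-- Value-iteration iterates for the sampling CMDP.  States are `(v1, v2)` with
`v2 : Option ℕ` (`none` meaning the transmitter holds no packet, `v2 = ∞`). -/
noncomputable def V (α q lam : ℝ) : ℕ → ℕ → Option ℕ → ℝ
  | 0, _, _ => 0
  | n + 1, v1, v2 =>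
      (v1 : ℝ) +
        min
          (lam + α * ((1 - q) * V α q lam n (v1 + 1) (some 1) +
            q * V α q lam n 1 none))
          (match v2 with
            | some w => α * ((1 - q) * V α q lam n (v1 + 1) (some (w + 1)) +
                q * V α q lam n (w + 1) none)
            | none => α * V α q lam n (v1 + 1) none)

variable {α q lam lam' : ℝ}

lemma comb_mono (hα : 0 ≤ α) (hq0 : 0 ≤ q) (hq1 : q ≤ 1) {a b a' b' : ℝ}
    (h1 : a ≤ a') (h2 : b ≤ b') :
    α * ((1 - q) * a + q * b) ≤ α * ((1 - q) * a' + q * b') := by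
  apply mul_le_mul_of_nonneg_left _ hα
  nlinarith [mul_nonneg (sub_nonneg.2 hq1) (sub_nonneg.2 h1),
    mul_nonneg hq0 (sub_nonneg.2 h2)]

lemma V_mono (hα : 0 ≤ α) (hq0 : 0 ≤ q) (hq1 : q ≤ 1) :
    ∀ n v1 v1' (v2 : Option ℕ), v1 ≤ v1' →
      V α q lam n v1 v2 ≤ V α q lam n v1' v2 := by
  intro n
  induction n with
  | zero => intro v1 v1' v2 _; simp [V]
  | succ n ih =>
    intro v1 v1' v2 h
    have h1 : (v1 : ℝ) ≤ (v1' : ℝ) := by exact_mod_cast h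
    have hs := add_le_add_right
      (comb_mono hα hq0 hq1 (ih (v1 + 1) (v1' + 1) (some 1) (by omega)) (le_refl (V α q lam n 1 none))) lam
    cases v2 with
    | none =>
      simp only [V]
      exact add_le_add h1 (min_le_min hs
        (mul_le_mul_of_nonneg_left (ih (v1 + 1) (v1' + 1) none (by omega)) hα))
    | some w =>
      simp only [V]
      exact add_le_add h1 (min_le_min hs
        (comb_mono hα hq0 hq1 (ih (v1 + 1) (v1' + 1) (some (w + 1)) (by omega)) (le_refl (V α q lam n (w + 1) none))))

lemma V_packet (hα : 0 ≤ α) (hq0 : 0 ≤ q) (hq1 : q ≤ 1) :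
    ∀ n v1 w, w ≤ v1 → V α q lam n v1 (some w) ≤ V α q lam n v1 none := by
  intro n
  induction n with
  | zero => intro v1 w _; simp [V]
  | succ n ih =>
    intro v1 w hw
    simp only [V]
    refine add_le_add_right (min_le_min le_rfl ?_) _
    have h1 := ih (v1 + 1) (w + 1) (by omega)
    have h2 := V_mono (lam := lam) hα hq0 hq1 n (w + 1) (v1 + 1) none (by omega)
    calc α * ((1 - q) * V α q lam n (v1 + 1) (some (w + 1)) +
            q * V α q lam n (w + 1) none)
        ≤ α * ((1 - q) * V α q lam n (v1 + 1) none +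
            q * V α q lam n (v1 + 1) none) := comb_mono hα hq0 hq1 h1 h2
      _ = α * V α q lam n (v1 + 1) none := by ring

lemma V_nonneg (hα : 0 ≤ α) (hq0 : 0 ≤ q) (hq1 : q ≤ 1) (hlam : 0 ≤ lam) :
    ∀ n v1 (v2 : Option ℕ), 0 ≤ V α q lam n v1 v2 := by
  intro n
  induction n with
  | zero => intro v1 v2; simp [V]
  | succ n ih =>
    intro v1 v2
    have hcomb : ∀ a b : ℕ → Option ℕ → Prop, True := fun _ _ => trivial
    have hs : 0 ≤ lam + α * ((1 - q) * V α q lam n (v1 + 1) (some 1) +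
        q * V α q lam n 1 none) :=
      add_nonneg hlam (mul_nonneg hα (add_nonneg
        (mul_nonneg (sub_nonneg.2 hq1) (ih _ _)) (mul_nonneg hq0 (ih _ _))))
    cases v2 with
    | none =>
      simp only [V]
      have h2 : 0 ≤ α * V α q lam n (v1 + 1) none := mul_nonneg hα (ih _ _)
      have := le_min hs h2
      have := Nat.cast_nonneg (α := ℝ) v1
      linarith
    | some w =>
      simp only [V]
      have h2 : 0 ≤ α * ((1 - q) * V α q lam n (v1 + 1) (some (w + 1)) +
          q * V α q lam n (w + 1) none) :=
        mul_nonneg hα (add_nonneg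
          (mul_nonneg (sub_nonneg.2 hq1) (ih _ _)) (mul_nonneg hq0 (ih _ _)))
      have := le_min hs h2
      have := Nat.cast_nonneg (α := ℝ) v1
      linarith

lemma V_le_bound (hα : 0 ≤ α) (hα1 : α < 1) :
    ∀ n v1, V α q lam n v1 none ≤ (v1 : ℝ) / (1 - α) + α / (1 - α) ^ 2 := by
  have h1 : (0:ℝ) < 1 - α := by linarith
  intro n
  induction n with
  | zero =>
    intro v1
    simp only [V]
    positivity
  | succ n ih =>
    intro v1
    simp only [V]
    have h2 : min (lam + α * ((1 - q) * V α q lam n (v1 + 1) (some 1) +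
        q * V α q lam n 1 none)) (α * V α q lam n (v1 + 1) none) ≤
        α * V α q lam n (v1 + 1) none := min_le_right _ _
    have h3 := ih (v1 + 1)
    push_cast at h3
    have h4 := mul_le_mul_of_nonneg_left h3 hα
    have key : (v1 : ℝ) + α * (((v1 : ℝ) + 1) / (1 - α) + α / (1 - α) ^ 2) =
        (v1 : ℝ) / (1 - α) + α / (1 - α) ^ 2 := by
      field_simp
      ring
    linarith

lemma V_lipschitz (hα : 0 ≤ α) (hα1 : α < 1) (hq0 : 0 ≤ q) (hq1 : q ≤ 1) :
    ∀ n v1 (v2 : Option ℕ),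
      |V α q lam n v1 v2 - V α q lam' n v1 v2| ≤ |lam - lam'| / (1 - α) := by
  have h1 : (0:ℝ) < 1 - α := by linarith
  have hD := abs_nonneg (lam - lam')
  set D := |lam - lam'| with hDdef
  have hKey : D + α * (D / (1 - α)) ≤ D / (1 - α) := by
    have : D + α * (D / (1 - α)) = D / (1 - α) := by field_simp; ring
    linarith
  intro n
  induction n with
  | zero =>
    intro v1 v2
    simp only [V, sub_self, abs_zero]
    positivity
  | succ n ih =>
    intro v1 v2
    have comb : ∀ (a a' b b' : ℝ), |a - a'| ≤ D / (1 - α) → |b - b'| ≤ D / (1 - α) →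
        |α * ((1 - q) * a + q * b) - α * ((1 - q) * a' + q * b')| ≤
          α * (D / (1 - α)) := by
      intro a a' b b' ha hb
      have : α * ((1 - q) * a + q * b) - α * ((1 - q) * a' + q * b') =
          α * ((1 - q) * (a - a') + q * (b - b')) := by ring
      rw [this, abs_mul, abs_of_nonneg hα]
      apply mul_le_mul_of_nonneg_left _ hα
      calc |(1 - q) * (a - a') + q * (b - b')|
          ≤ |(1 - q) * (a - a')| + |q * (b - b')| := abs_add_le _ _
        _ = (1 - q) * |a - a'| + q * |b - b'| := by
            rw [abs_mul, abs_mul, abs_of_nonneg hq0, abs_of_nonneg (sub_nonneg.2 hq1)]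
        _ ≤ (1 - q) * (D / (1 - α)) + q * (D / (1 - α)) := by
            have := mul_le_mul_of_nonneg_left ha (sub_nonneg.2 hq1)
            have := mul_le_mul_of_nonneg_left hb hq0
            linarith
        _ = D / (1 - α) := by ring
    have hs : |(lam + α * ((1 - q) * V α q lam n (v1 + 1) (some 1) +
          q * V α q lam n 1 none)) -
        (lam' + α * ((1 - q) * V α q lam' n (v1 + 1) (some 1) +
          q * V α q lam' n 1 none))| ≤ D / (1 - α) := by
      have hc := comb _ _ _ _ (ih (v1 + 1) (some 1)) (ih 1 none)
      calc |(lam + α * ((1 - q) * V α q lam n (v1 + 1) (some 1) +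
              q * V α q lam n 1 none)) -
            (lam' + α * ((1 - q) * V α q lam' n (v1 + 1) (some 1) +
              q * V α q lam' n 1 none))|
          ≤ |lam - lam'| + |α * ((1 - q) * V α q lam n (v1 + 1) (some 1) +
              q * V α q lam n 1 none) -
              α * ((1 - q) * V α q lam' n (v1 + 1) (some 1) +
              q * V α q lam' n 1 none)| := by
            have := abs_add_le (lam - lam')
              (α * ((1 - q) * V α q lam n (v1 + 1) (some 1) +
                q * V α q lam n 1 none) -
               α * ((1 - q) * V α q lam' n (v1 + 1) (some 1) +
                q * V α q lam' n 1 none))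
            convert this using 2
            case e'_3.e'_4 => ring
            all_goals rfl
        _ ≤ D + α * (D / (1 - α)) := by rw [← hDdef]; linarith
        _ ≤ D / (1 - α) := hKey
    cases v2 with
    | none =>
      simp only [V]
      have hn : |α * V α q lam n (v1 + 1) none - α * V α q lam' n (v1 + 1) none| ≤
          D / (1 - α) := by
        rw [← mul_sub, abs_mul, abs_of_nonneg hα]
        calc α * |V α q lam n (v1 + 1) none - V α q lam' n (v1 + 1) none|
            ≤ α * (D / (1 - α)) := mul_le_mul_of_nonneg_left (ih _ _) hα
          _ ≤ D / (1 - α) := by linarith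
      calc |((v1:ℝ) + _) - ((v1:ℝ) + _)| = |_ - _| := by rw [add_sub_add_left_eq_sub]
        _ ≤ max _ _ := abs_min_sub_min_le_max _ _ _ _
        _ ≤ D / (1 - α) := max_le hs hn
    | some w =>
      simp only [V]
      have hn : |α * ((1 - q) * V α q lam n (v1 + 1) (some (w + 1)) +
            q * V α q lam n (w + 1) none) -
          α * ((1 - q) * V α q lam' n (v1 + 1) (some (w + 1)) +
            q * V α q lam' n (w + 1) none)| ≤ D / (1 - α) := by
        have := comb _ _ _ _ (ih (v1 + 1) (some (w + 1))) (ih (w + 1) none)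
        linarith
      calc |((v1:ℝ) + _) - ((v1:ℝ) + _)| = |_ - _| := by rw [add_sub_add_left_eq_sub]
        _ ≤ max _ _ := abs_min_sub_min_le_max _ _ _ _
        _ ≤ D / (1 - α) := max_le hs hn


open Filter


/-- For every no-packet state `(v1, ∞)` there is a multiplier `λ ≥ 0` at
which the two action-values of the limiting discounted value function
coincide. -/
theorem exists_indifference_lambda (α q : ℝ) (hα0 : 0 < α) (hα1 : α < 1)
    (hq0 : 0 < q) (hq1 : q < 1)
    (Vlim : ℝ → ℕ → Option ℕ → ℝ)
    (hVlim : ∀ lam : ℝ, 0 ≤ lam → ∀ v1 v2,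
      Tendsto (fun n => V α q lam n v1 v2) atTop (nhds (Vlim lam v1 v2)))
    (v1 : ℕ) (hv1 : 1 ≤ v1) :
    ∃ lam : ℝ, 0 ≤ lam ∧
      lam + α * ((1 - q) * Vlim lam (v1 + 1) (some 1) +
        q * Vlim lam 1 none) = α * Vlim lam (v1 + 1) none := by
  have hα := hα0.le
  have hq0' := hq0.le
  have hq1' := hq1.le
  have h1α : (0:ℝ) < 1 - α := by linarith
  -- nonnegativity of the limit
  have hVnn : ∀ l : ℝ, 0 ≤ l → ∀ a b, 0 ≤ Vlim l a b := by
    intro l hl a b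
    exact ge_of_tendsto (hVlim l hl a b)
      (Eventually.of_forall fun n => V_nonneg hα hq0' hq1' hl n a b)
  -- upper bound for no-packet states
  set C : ℝ := ((v1 : ℝ) + 1) / (1 - α) + α / (1 - α) ^ 2 with hC
  have hVub : ∀ l : ℝ, 0 ≤ l → Vlim l (v1 + 1) none ≤ C := by
    intro l hl
    refine le_of_tendsto (hVlim l hl (v1 + 1) none)
      (Eventually.of_forall fun n => ?_)
    have := V_le_bound (q := q) (lam := l) hα hα1 n (v1 + 1)
    push_cast at this
    exact this
  -- the action-value gap
  set g : ℝ → ℝ := fun l => l + α * ((1 - q) * Vlim l (v1 + 1) (some 1) +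
      q * Vlim l 1 none) - α * Vlim l (v1 + 1) none with hg
  set Λ : ℝ := α * C + 1 with hΛ
  have hCnn : 0 ≤ C := by positivity
  have hΛnn : (0:ℝ) ≤ Λ := by positivity
  -- g 0 ≤ 0 : sampling is weakly optimal at λ = 0
  have hg0 : g 0 ≤ 0 := by
    have hF : Tendsto (fun n => α * ((1 - q) * V α q 0 n (v1 + 1) (some 1) +
        q * V α q 0 n 1 none)) atTop (nhds (α * ((1 - q) * Vlim 0 (v1 + 1) (some 1) +
        q * Vlim 0 1 none))) :=
      (((hVlim 0 le_rfl (v1 + 1) (some 1)).const_mul (1 - q)).add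
        ((hVlim 0 le_rfl 1 none).const_mul q)).const_mul α
    have hG : Tendsto (fun n => α * V α q 0 n (v1 + 1) none) atTop
        (nhds (α * Vlim 0 (v1 + 1) none)) :=
      (hVlim 0 le_rfl (v1 + 1) none).const_mul α
    have hle : α * ((1 - q) * Vlim 0 (v1 + 1) (some 1) + q * Vlim 0 1 none) ≤
        α * Vlim 0 (v1 + 1) none := by
      refine le_of_tendsto_of_tendsto' hF hG fun n => ?_
      have h1 := V_packet (lam := (0:ℝ)) hα hq0' hq1' n (v1 + 1) 1 (by omega)
      have h2 := V_mono (lam := (0:ℝ)) hα hq0' hq1' n 1 (v1 + 1) none (by omega)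
      calc α * ((1 - q) * V α q 0 n (v1 + 1) (some 1) + q * V α q 0 n 1 none)
          ≤ α * ((1 - q) * V α q 0 n (v1 + 1) none + q * V α q 0 n (v1 + 1) none) :=
            comb_mono hα hq0' hq1' h1 h2
        _ = α * V α q 0 n (v1 + 1) none := by ring
    simp only [hg]
    linarith
  -- g Λ ≥ 1 : not sampling wins for large λ
  have hgΛ : 1 ≤ g Λ := by
    have h1 := hVnn Λ hΛnn (v1 + 1) (some 1)
    have h2 := hVnn Λ hΛnn 1 none
    have h3 := hVub Λ hΛnn
    simp only [hg]
    nlinarith [mul_nonneg hα (sub_nonneg.2 hq1'), mul_nonneg hα hq0']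
  -- Lipschitz continuity of the limit in λ
  have hLip : ∀ a b, ∀ l ∈ Set.Icc (0:ℝ) Λ, ∀ l' ∈ Set.Icc (0:ℝ) Λ,
      dist (Vlim l a b) (Vlim l' a b) ≤ (1 / (1 - α)) * dist l l' := by
    intro a b l hl l' hl'
    rw [Real.dist_eq, Real.dist_eq]
    have ht : Tendsto (fun n => |V α q l n a b - V α q l' n a b|) atTop
        (nhds (|Vlim l a b - Vlim l' a b|)) :=
      ((hVlim l hl.1 a b).sub (hVlim l' hl'.1 a b)).abs
    have := le_of_tendsto ht (Eventually.of_forall fun n =>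
      V_lipschitz (lam := l) (lam' := l') hα hα1 hq0' hq1' n a b)
    calc |Vlim l a b - Vlim l' a b| ≤ |l - l'| / (1 - α) := this
      _ = 1 / (1 - α) * |l - l'| := by ring
  have hcont : ∀ a b, ContinuousOn (fun l => Vlim l a b) (Set.Icc 0 Λ) := by
    intro a b
    refine LipschitzOnWith.continuousOn (K := Real.toNNReal (1 / (1 - α))) ?_
    rw [lipschitzOnWith_iff_dist_le_mul]
    intro x hx y hy
    rw [Real.coe_toNNReal _ (by positivity)]
    exact hLip a b x hx y hy
  have hgcont : ContinuousOn g (Set.Icc 0 Λ) := by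
    simp only [hg]
    exact (continuousOn_id.add (continuousOn_const.mul
      ((continuousOn_const.mul (hcont (v1 + 1) (some 1))).add
        (continuousOn_const.mul (hcont 1 none))))).sub
      (continuousOn_const.mul (hcont (v1 + 1) none))
  -- intermediate value theorem
  have hmem : (0:ℝ) ∈ Set.Icc (g 0) (g Λ) := ⟨hg0, by linarith⟩
  obtain ⟨l, hlmem, hgl⟩ := intermediate_value_Icc hΛnn hgcont hmem
  refine ⟨l, hlmem.1, ?_⟩
  simp only [hg] at hgl
  linarith
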